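/- There exists τ > 0, depending only on Σ and R₀, such that for every f ∈ A one has max_{x∈Σ} T(x,f) > τ, where T(x,f) = ∫_{B_x(σ(x,f))} f dV. The constant τ can be taken as 1/(k+2), where k is the number of balls of radius σ(x₀,f)/3 needed to cover the annulus A_{x₀}(σ(x₀,f), R·σ(x₀,f)) (a number bounded in terms of Σ and R₀ only). -/

import Mathlib

open MeasureTheory Metric
open scoped ENNReal

/-- There exists `τ > 0`, depending only on `Σ` and `R₀` (through a covering constant `k`
of annuli `A_{x₀}(ρ, (R₀/3)ρ)` by `k` balls of radius `ρ/3`, and one can take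
`τ = 1/(k+2)`), such that for every `f ∈ A` (a.e. positive, total integral `1`) with
balancing radii `σ(x,f)`, the maximum over `x` of `T(x,f) = ∫_{B_x(σ(x,f))} f` exceeds `τ`. -/
theorem stmt3 {S : Type*} [MetricSpace S] [CompactSpace S] [MeasurableSpace S]
    [BorelSpace S] (μ : Measure S) [IsProbabilityMeasure μ] [μ.IsOpenPosMeasure]
    (R₀ : ℝ) (hR₀ : 3 < R₀)
    (k : ℕ)
    (hcov : ∀ (x₀ : S) (ρ : ℝ), 0 < ρ → ∃ c : Fin k → S,
      {y | ρ < dist y x₀ ∧ dist y x₀ < R₀ / 3 * ρ} ⊆ ⋃ i, ball (c i) (ρ / 3)) :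
    ∃ τ : ℝ, 0 < τ ∧
      ∀ (f : S → ℝ) (σ : S → ℝ),
        (∀ᵐ x ∂μ, 0 < f x) → Integrable f μ → (∫ x, f x ∂μ) = 1 →
        (∀ x, 0 < σ x) →
        (∀ x, ∫ y in ball x (σ x), f y ∂μ = ∫ y in (ball x (R₀ * σ x))ᶜ, f y ∂μ) →
        ∀ x₀ : S,
          (∀ x, ∫ y in ball x (σ x), f y ∂μ ≤ ∫ y in ball x₀ (σ x₀), f y ∂μ) →
          τ < ∫ y in ball x₀ (σ x₀), f y ∂μ := by
  classical
  have hR₀0 : (0:ℝ) < R₀ := by linarith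
  set R : ℝ := R₀ / 3 with hRdef
  have hR1 : 1 < R := by rw [hRdef]; linarith
  set s : ℝ := min ((1 + R)/2) 2 with hsdef
  have hs1 : 1 < s := by
    rw [hsdef]; exact lt_min (by linarith) (by norm_num)
  have hsR : s < R := by
    rw [hsdef]
    exact lt_of_le_of_lt (min_le_left _ _) (by linarith)
  have hs0 : 0 < s := by linarith
  obtain ⟨J, hJ⟩ : ∃ J : ℕ, 3 < s ^ J := pow_unbounded_of_one_lt 3 hs1
  set C : ℕ := (1 + (J+1)*k) * (1+k) + 1 with hCdef
  have hC2 : 2 ≤ C := by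
    have : 1 ≤ (1 + (J+1)*k) * (1+k) := Nat.one_le_iff_ne_zero.mpr (by positivity)
    omega
  refine ⟨1 / (2*C), by positivity, ?_⟩
  intro f σ hfpos hfint hftot hσpos hbal x₀ hmax
  by_contra hcon
  push_neg at hcon
  set τ' : ℝ≥0∞ := ENNReal.ofReal (1/(2*C)) with hτdef
  have hmul : ∀ n : ℕ, n ≤ C → (n:ℝ≥0∞) * τ' < 1 := by
    intro n hn
    have hC0' : 0 < C := by omega
    have hC0 : (0:ℝ) < C := by exact_mod_cast hC0'
    have h1 : (n:ℝ≥0∞) * τ' = ENNReal.ofReal ((n:ℝ) * (1/(2*C))) := by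
      rw [ENNReal.ofReal_mul (by positivity), ENNReal.ofReal_natCast]
    rw [h1]
    have h2 : (n:ℝ) * (1/(2*C)) ≤ 1/2 := by
      have hnC : (n:ℝ) ≤ C := by exact_mod_cast hn
      rw [mul_one_div, div_le_iff₀ (by positivity)]
      linarith
    calc ENNReal.ofReal ((n:ℝ) * (1/(2*C))) ≤ ENNReal.ofReal (1/2) :=
          ENNReal.ofReal_le_ofReal h2
      _ < 1 := by rw [ENNReal.ofReal_lt_one]; norm_num
  set ν : Measure S := μ.withDensity (fun x => ENNReal.ofReal (f x)) with hνdef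
  have hnn : 0 ≤ᵐ[μ] f := hfpos.mono fun x h => h.le
  have hconv : ∀ t : Set S, MeasurableSet t → ν t = ENNReal.ofReal (∫ y in t, f y ∂μ) := by
    intro t ht
    rw [hνdef, withDensity_apply _ ht]
    exact (ofReal_integral_eq_lintegral_ofReal hfint.integrableOn (ae_restrict_of_ae hnn)).symm
  have hν1 : ν Set.univ = 1 := by
    rw [hconv _ MeasurableSet.univ, setIntegral_univ, hftot, ENNReal.ofReal_one]
  haveI : IsFiniteMeasure ν := ⟨by rw [hν1]; exact ENNReal.one_lt_top⟩
  have hF1 : ∀ x, ν (ball x (σ x)) ≤ τ' := by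
    intro x
    rw [hconv _ measurableSet_ball, hτdef]
    exact ENNReal.ofReal_le_ofReal ((hmax x).trans hcon)
  have hF2 : ∀ x, ν ((ball x (R₀ * σ x))ᶜ) ≤ τ' := by
    intro x
    rw [hconv _ measurableSet_ball.compl, ← hbal x, ← hconv _ measurableSet_ball]
    exact hF1 x
  have hF3 : ∀ x, 1 ≤ ν (ball x (R₀ * σ x)) + τ' := by
    intro x
    have h := measure_add_measure_compl (μ := ν) (measurableSet_ball (x := x) (ε := R₀ * σ x))
    rw [hν1] at h
    calc (1:ℝ≥0∞) = ν (ball x (R₀ * σ x)) + ν ((ball x (R₀ * σ x))ᶜ) := h.symm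
      _ ≤ ν (ball x (R₀ * σ x)) + τ' := add_le_add_right (hF2 x) _
  -- infimum of radii
  have hrpos : ∀ x : S, 0 < R₀ * σ x := fun x => mul_pos hR₀0 (hσpos x)
  have hbdd : BddBelow (Set.range fun x => R₀ * σ x) := by
    refine ⟨0, ?_⟩
    rintro y ⟨x, rfl⟩
    exact (hrpos x).le
  haveI hSne : Nonempty S := ⟨x₀⟩
  set m : ℝ := ⨅ x, R₀ * σ x with hmdef
  have hm0 : 0 ≤ m := le_ciInf fun x => (hrpos x).le
  have hmle : ∀ x, m ≤ R₀ * σ x := fun x => ciInf_le hbdd x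
  rcases hm0.eq_or_lt with hm | hm
  · -- case m = 0 : mass concentrates at a point
    have hex : ∀ n : ℕ, ∃ x : S, R₀ * σ x < 1/(n+1) := by
      intro n
      refine exists_lt_of_ciInf_lt ?_
      rw [← hmdef, ← hm]
      positivity
    choose xs hxs using hex
    have h2τ : ¬ (1 ≤ 2 * τ') := by
      intro h
      exact absurd h (not_le_of_gt (by exact_mod_cast hmul 2 hC2))
    have hint : ∀ a b : S,
        ∃ z, z ∈ ball a (R₀ * σ a) ∧ z ∈ ball b (R₀ * σ b) := by
      intro a b
      by_contra h
      push_neg at h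
      have hdisj : Disjoint (ball a (R₀ * σ a)) (ball b (R₀ * σ b)) :=
        Set.disjoint_left.mpr fun z hz1 hz2 => h z hz1 hz2
      have hun : ν (ball a (R₀ * σ a) ∪ ball b (R₀ * σ b)) =
          ν (ball a (R₀ * σ a)) + ν (ball b (R₀ * σ b)) :=
        measure_union hdisj measurableSet_ball
      have hle1 : ν (ball a (R₀ * σ a) ∪ ball b (R₀ * σ b)) ≤ 1 := by
        rw [← hν1]; exact measure_mono (Set.subset_univ _)
      have h2 : (1:ℝ≥0∞) + 1 ≤ 1 + 2 * τ' := by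
        calc (1:ℝ≥0∞) + 1 ≤ (ν (ball a (R₀ * σ a)) + τ') + (ν (ball b (R₀ * σ b)) + τ') :=
              add_le_add (hF3 a) (hF3 b)
          _ = ν (ball a (R₀ * σ a) ∪ ball b (R₀ * σ b)) + 2 * τ' := by rw [hun]; ring
          _ ≤ 1 + 2 * τ' := add_le_add_left hle1 _
      exact h2τ ((ENNReal.add_le_add_iff_left ENNReal.one_ne_top).mp h2)
    have hcs : CauchySeq xs := by
      rw [Metric.cauchySeq_iff]
      intro ε hε
      obtain ⟨N, hN⟩ := exists_nat_one_div_lt (half_pos hε)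
      refine ⟨N, fun a ha b hb => ?_⟩
      obtain ⟨z, hz1, hz2⟩ := hint (xs a) (xs b)
      have h1 : dist (xs a) z < 1/(N+1:ℝ) := by
        have := mem_ball'.mp hz1
        have h1a : (1:ℝ)/(a+1) ≤ 1/(N+1) := by
          apply one_div_le_one_div_of_le (by positivity)
          exact_mod_cast Nat.succ_le_succ ha
        exact lt_of_lt_of_le (this.trans (hxs a)) h1a
      have h2 : dist z (xs b) < 1/(N+1:ℝ) := by
        have := mem_ball.mp hz2
        have h1b : (1:ℝ)/(b+1) ≤ 1/(N+1) := by
          apply one_div_le_one_div_of_le (by positivity)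
          exact_mod_cast Nat.succ_le_succ hb
        exact lt_of_lt_of_le (this.trans (hxs b)) h1b
      calc dist (xs a) (xs b) ≤ dist (xs a) z + dist z (xs b) := dist_triangle _ _ _
        _ < 1/(N+1) + 1/(N+1) := add_lt_add h1 h2
        _ < ε/2 + ε/2 := add_lt_add hN hN
        _ = ε := add_halves ε
    obtain ⟨p, hp⟩ := cauchySeq_tendsto_of_complete hcs
    have hballp : ∀ δ : ℝ, 0 < δ → 1 ≤ ν (ball p δ) + τ' := by
      intro δ hδ
      obtain ⟨N₁, hN₁⟩ := (Metric.tendsto_atTop.mp hp) (δ/2) (half_pos hδ)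
      obtain ⟨N₂, hN₂⟩ := exists_nat_one_div_lt (half_pos hδ)
      set n := max N₁ N₂ with hn
      have hd1 : dist (xs n) p < δ/2 := hN₁ n (le_max_left _ _)
      have hd2 : R₀ * σ (xs n) < δ/2 := by
        have h1b : (1:ℝ)/(n+1) ≤ 1/(N₂+1) := by
          apply one_div_le_one_div_of_le (by positivity)
          exact_mod_cast Nat.succ_le_succ (le_max_right N₁ N₂)
        exact (hxs n).trans (lt_of_le_of_lt h1b hN₂)
      have hsub : ball (xs n) (R₀ * σ (xs n)) ⊆ ball p δ := by
        intro z hz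
        have := mem_ball.mp hz
        rw [mem_ball]
        calc dist z p ≤ dist z (xs n) + dist (xs n) p := dist_triangle _ _ _
          _ < δ/2 + δ/2 := add_lt_add (this.trans hd2) hd1
          _ = δ := add_halves δ
      exact le_trans (hF3 (xs n)) (add_le_add_left (measure_mono hsub) τ')
    have hiber : (⋂ n : ℕ, ball p (1/(n+1))) = {p} := by
      ext z
      simp only [Set.mem_iInter, mem_ball, Set.mem_singleton_iff]
      constructor
      · intro h
        rw [← dist_le_zero (x := z) (y := p)]
        by_contra hzp
        push_neg at hzp
        obtain ⟨n, hn⟩ := exists_nat_one_div_lt hzp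
        exact absurd (h n) (not_lt_of_ge hn.le)
      · rintro rfl
        intro n
        rw [dist_self]
        positivity
    have hdir : Directed (· ⊇ ·) (fun n : ℕ => ball p (1/(n+1))) := by
      refine Antitone.directed_ge ?_
      intro a b hab
      apply ball_subset_ball
      apply one_div_le_one_div_of_le (by positivity)
      exact_mod_cast Nat.succ_le_succ hab
    have hiinf : ν {p} = ⨅ n : ℕ, ν (ball p (1/(n+1))) := by
      rw [← hiber]
      exact Directed.measure_iInter (fun n => measurableSet_ball.nullMeasurableSet)
        hdir ⟨0, measure_ne_top ν _⟩
    have hsing : 1 ≤ ν {p} + τ' := by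
      rw [hiinf, ENNReal.iInf_add]
      refine le_iInf fun n => hballp _ (by positivity)
    have hple : ν {p} ≤ τ' := by
      refine le_trans (measure_mono ?_) (hF1 p)
      rw [Set.singleton_subset_iff]
      exact mem_ball_self (hσpos p)
    refine h2τ ?_
    calc (1:ℝ≥0∞) ≤ ν {p} + τ' := hsing
      _ ≤ τ' + τ' := add_le_add_left hple _
      _ = 2 * τ' := (two_mul τ').symm
  · -- case m > 0
    set u : ℝ := m / R₀ with hudef
    have hu : 0 < u := div_pos hm hR₀0
    have hmu : R₀ * u = m := by
      rw [hudef]; field_simp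
    have hσu : ∀ x, u ≤ σ x := by
      intro x
      rw [hudef, div_le_iff₀' hR₀0]
      exact hmle x
    have hG2 : ∀ (w : S) (ρ : ℝ), 0 < ρ → ρ ≤ 3*u →
        ν {y | ρ < dist y w ∧ dist y w < R₀ / 3 * ρ} ≤ (k:ℝ≥0∞) * τ' := by
      intro w ρ hρ hρ3
      obtain ⟨c, hc⟩ := hcov w ρ hρ
      calc ν {y | ρ < dist y w ∧ dist y w < R₀ / 3 * ρ}
          ≤ ν (⋃ i, ball (c i) (ρ/3)) := measure_mono hc
        _ ≤ ∑' i : Fin k, ν (ball (c i) (ρ/3)) := measure_iUnion_le _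
        _ ≤ ∑' _i : Fin k, τ' := by
            refine ENNReal.tsum_le_tsum fun i => ?_
            refine le_trans (measure_mono (ball_subset_ball ?_)) (hF1 (c i))
            calc ρ/3 ≤ u := by linarith
              _ ≤ σ (c i) := hσu (c i)
        _ = (k:ℝ≥0∞) * τ' := by
            simp [tsum_fintype, Finset.sum_const, nsmul_eq_mul]
    set E : ℝ≥0∞ := τ' + ((J+1) * k : ℕ) * τ' with hEdef
    have hG3 : ∀ w : S, ν (ball w m) ≤ E := by
      intro w
      have hcover : ball w m ⊆ ball w u ∪
          ⋃ j ∈ Finset.range (J+1),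
            {y | (3*u/s^j) < dist y w ∧ dist y w < R₀ / 3 * (3*u/s^j)} := by
        intro y hy
        have hdm : dist y w < m := mem_ball.mp hy
        rcases lt_or_ge (dist y w) u with h | h
        · exact Set.mem_union_left _ (mem_ball.mpr h)
        · refine Set.mem_union_right _ ?_
          have hPJ : 3*u/s^J < dist y w := by
            refine lt_of_lt_of_le ?_ h
            rw [div_lt_iff₀ (by positivity)]
            nlinarith [hJ, hu]
          have hPex : ∃ j, 3*u/s^j < dist y w := ⟨J, hPJ⟩
          obtain ⟨j₀, hj₀le, h1, hmin⟩ : ∃ j₀, j₀ ≤ J ∧ 3*u/s^j₀ < dist y w ∧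
              ∀ i < j₀, ¬(3*u/s^i < dist y w) :=
            ⟨Nat.find hPex, Nat.find_min' hPex hPJ, Nat.find_spec hPex,
              fun i hi => Nat.find_min hPex hi⟩
          have h2 : dist y w < R₀ / 3 * (3*u/s^j₀) := by
            have hring : R₀ / 3 * (3*u/s^j₀) = m / s^j₀ := by
              rw [← hmu]; field_simp
            rw [hring]
            rcases Nat.eq_zero_or_pos j₀ with h0 | hpos
            · rw [h0]; simpa using hdm
            · obtain ⟨i, rfl⟩ := Nat.exists_eq_succ_of_ne_zero (Nat.pos_iff_ne_zero.mp hpos)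
              have hnot : ¬ (3*u/s^i < dist y w) := hmin i (Nat.lt_succ_self i)
              push_neg at hnot
              refine lt_of_le_of_lt hnot ?_
              rw [div_lt_div_iff₀ (by positivity) (by positivity), pow_succ]
              have hsi : (0:ℝ) < s^i := by positivity
              nlinarith [hsi, hu, hsR, mul_pos hsi hu]
          refine Set.mem_biUnion (Finset.mem_range.mpr (Nat.lt_succ_of_le hj₀le)) ⟨h1, h2⟩
      calc ν (ball w m)
          ≤ ν (ball w u) + ν (⋃ j ∈ Finset.range (J+1),
              {y | (3*u/s^j) < dist y w ∧ dist y w < R₀ / 3 * (3*u/s^j)}) :=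
            le_trans (measure_mono hcover) (measure_union_le _ _)
        _ ≤ τ' + ∑ j ∈ Finset.range (J+1), ν
              {y | (3*u/s^j) < dist y w ∧ dist y w < R₀ / 3 * (3*u/s^j)} := by
            refine add_le_add ?_ (measure_biUnion_finset_le _ _)
            refine le_trans (measure_mono (ball_subset_ball (hσu w))) (hF1 w)
        _ ≤ τ' + ∑ _j ∈ Finset.range (J+1), (k:ℝ≥0∞) * τ' := by
            refine add_le_add_right (Finset.sum_le_sum fun j _ => ?_) _
            refine hG2 w (3*u/s^j) (by positivity) ?_
            rw [div_le_iff₀ (by positivity)]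
            nlinarith [one_le_pow₀ hs1.le (n := j), hu]
        _ = E := by
            rw [hEdef, Finset.sum_const, Finset.card_range, nsmul_eq_mul]
            push_cast
            ring
    -- choose x₁ with R₀ σ x₁ < m * R
    obtain ⟨x₁, hx₁⟩ : ∃ x : S, R₀ * σ x < m * R := by
      refine exists_lt_of_ciInf_lt ?_
      rw [← hmdef]
      nlinarith [hm, hR1]
    set ρ' : ℝ := ((R₀ * σ x₁) / R + m) / 2 with hρ'def
    have hρ'0 : 0 < ρ' := by
      have := hrpos x₁
      have hRpos : (0:ℝ) < R := by linarith
      positivity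
    have hfrac : (R₀ * σ x₁) / R < m := by
      rw [div_lt_iff₀ (by linarith)]
      exact hx₁
    have hρ'm : ρ' < m := by rw [hρ'def]; linarith
    have hr₁ : R₀ * σ x₁ < R * ρ' := by
      have hRne : R ≠ 0 := by linarith
      have heq : R * ρ' = (R₀ * σ x₁ + R * m) / 2 := by
        rw [hρ'def]; field_simp
      rw [heq]; linarith [hx₁]
    obtain ⟨c, hc⟩ := hcov x₁ ρ' hρ'0
    have hcoveru : (Set.univ : Set S) ⊆
        ball x₁ m ∪ ((⋃ i, ball (c i) (ρ'/3)) ∪ (ball x₁ (R₀ * σ x₁))ᶜ) := by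
      intro y _
      rcases lt_or_ge (dist y x₁) m with h | h
      · exact Set.mem_union_left _ (mem_ball.mpr h)
      · rcases lt_or_ge (dist y x₁) (R₀ * σ x₁) with h2 | h2
        · refine Set.mem_union_right _ (Set.mem_union_left _ ?_)
          exact hc ⟨lt_of_lt_of_le hρ'm h, h2.trans hr₁⟩
        · refine Set.mem_union_right _ (Set.mem_union_right _ ?_)
          rw [Set.mem_compl_iff, mem_ball]
          exact not_lt_of_ge h2
    have hfinal : (1:ℝ≥0∞) ≤ E + ((k:ℝ≥0∞) * E + τ') := by
      calc (1:ℝ≥0∞) = ν Set.univ := hν1.symm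
        _ ≤ ν (ball x₁ m ∪ ((⋃ i, ball (c i) (ρ'/3)) ∪ (ball x₁ (R₀ * σ x₁))ᶜ)) :=
            measure_mono hcoveru
        _ ≤ ν (ball x₁ m) + (ν (⋃ i, ball (c i) (ρ'/3)) + ν ((ball x₁ (R₀ * σ x₁))ᶜ)) :=
            le_trans (measure_union_le _ _) (add_le_add_right (measure_union_le _ _) _)
        _ ≤ E + ((k:ℝ≥0∞) * E + τ') := by
            refine add_le_add (hG3 x₁) (add_le_add ?_ (hF2 x₁))
            calc ν (⋃ i, ball (c i) (ρ'/3)) ≤ ∑' i : Fin k, ν (ball (c i) (ρ'/3)) :=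
                  measure_iUnion_le _
              _ ≤ ∑' _i : Fin k, E := by
                  refine ENNReal.tsum_le_tsum fun i => ?_
                  refine le_trans (measure_mono (ball_subset_ball (by linarith))) (hG3 (c i))
              _ = (k:ℝ≥0∞) * E := by
                  simp [tsum_fintype, Finset.sum_const, nsmul_eq_mul]
    have hCτ : (1:ℝ≥0∞) ≤ (C:ℝ≥0∞) * τ' := by
      refine hfinal.trans (le_of_eq ?_)
      rw [hEdef, hCdef]
      push_cast
      ring
    exact absurd hCτ (not_le_of_gt (hmul C le_rfl))
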